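/- arXiv:1808.01783 — 2 statements merged into one kernel-verified Lean document; each statement's English description precedes it below -/
import Mathlib

section
/- Let α ≥ 2 and β ≥ 1. Then the residual map t ↦ R(t) := ‖Au_t − f‖_H and the regularizer map t ↦ J(t) := J(u_t), where u_t denotes any minimizer of E_t^{α,β}(·;f), are Lipschitz continuous on (δ,∞) for every δ > 0. -/
open Filter Topology Set
open scoped ENNReal RealInnerProductSpace

noncomputable section

/-- The variational energy `E_t^{α,β}(u; f)`. -/
def En {X : Type*} [NormedAddCommGroup X] [NormedSpace ℝ X]
    {H : Type*} [NormedAddCommGroup H] [InnerProductSpace ℝ H]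
    (A : X →L[ℝ] H) (J : X → ℝ≥0∞) (f : H) (t α β : ℝ) (u : X) : ℝ≥0∞ :=
  ENNReal.ofReal ((1 / α) * ‖A u - f‖ ^ α) + ENNReal.ofReal (t / β) * J u ^ β

/-- `u` is a minimizer of `E_t^{α,β}(·; f)`. -/
def IsMinimizer {X : Type*} [NormedAddCommGroup X] [NormedSpace ℝ X]
    {H : Type*} [NormedAddCommGroup H] [InnerProductSpace ℝ H]
    (A : X →L[ℝ] H) (J : X → ℝ≥0∞) (f : H) (t α β : ℝ) (u : X) : Prop :=
  ∀ v, En A J f t α β u ≤ En A J f t α β v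

/-- `J` is proper. -/
def IsProperFn {X : Type*} (J : X → ℝ≥0∞) : Prop := ∃ u, J u ≠ ⊤

/-- `J` is absolutely one-homogeneous. -/
def AbsOneHom {X : Type*} [NormedAddCommGroup X] [NormedSpace ℝ X] (J : X → ℝ≥0∞) : Prop :=
  ∀ (c : ℝ) (u : X), J (c • u) = ENNReal.ofReal |c| * J u

/-- `J` is convex. -/
def EConvexFn {X : Type*} [NormedAddCommGroup X] [NormedSpace ℝ X] (J : X → ℝ≥0∞) : Prop :=
  ∀ (u v : X) (a b : ℝ), 0 ≤ a → 0 ≤ b → a + b = 1 →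
    J (a • u + b • v) ≤ ENNReal.ofReal a * J u + ENNReal.ofReal b * J v

/-- The subdifferential of `J` at `u`; dual elements are represented as `X →L[ℝ] ℝ`. -/
def subdiff {X : Type*} [NormedAddCommGroup X] [NormedSpace ℝ X]
    (J : X → ℝ≥0∞) (u : X) : Set (X →L[ℝ] ℝ) :=
  {p | ∀ v, (J u : EReal) + ((p (v - u) : ℝ) : EReal) ≤ (J v : EReal)}

/-- The adjoint `A* q` as an element of the dual of `X`. -/
def Astar {X : Type*} [NormedAddCommGroup X] [NormedSpace ℝ X]
    {H : Type*} [NormedAddCommGroup H] [InnerProductSpace ℝ H]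
    (A : X →L[ℝ] H) (q : H) : X →L[ℝ] ℝ :=
  (innerSL ℝ q).comp A

/-- The set of norms `‖q‖` of source elements `q` for solutions of `Au = f`. -/
def SourceNorms {X : Type*} [NormedAddCommGroup X] [NormedSpace ℝ X]
    {H : Type*} [NormedAddCommGroup H] [InnerProductSpace ℝ H]
    (A : X →L[ℝ] H) (J : X → ℝ≥0∞) (f : H) : Set ℝ :=
  {r | ∃ (u : X) (q : H), J u ≠ ⊤ ∧ A u = f ∧ Astar A q ∈ subdiff J u ∧ r = ‖q‖}

/-- The weak-star topology on the dual `Y →L[ℝ] ℝ` of `Y`. -/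
def weakStar (Y : Type*) [NormedAddCommGroup Y] [NormedSpace ℝ Y] :
    TopologicalSpace (Y →L[ℝ] ℝ) :=
  TopologicalSpace.induced (fun (u : Y →L[ℝ] ℝ) (y : Y) => u y) inferInstance

/-- `J` is lower semicontinuous with respect to the weak-star topology. -/
def WeakStarLSC {Y : Type*} [NormedAddCommGroup Y] [NormedSpace ℝ Y]
    (J : (Y →L[ℝ] ℝ) → ℝ≥0∞) : Prop :=
  @LowerSemicontinuous _ _ (weakStar Y) _ J

/-- `A` is weak-star-to-weak continuous. -/
def WeakStarToWeakCont {Y : Type*} [NormedAddCommGroup Y] [NormedSpace ℝ Y]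
    {H : Type*} [NormedAddCommGroup H] [InnerProductSpace ℝ H]
    (A : (Y →L[ℝ] ℝ) →L[ℝ] H) : Prop :=
  ∀ h : H, @Continuous _ _ (weakStar Y) _ (fun u => (⟪A u, h⟫ : ℝ))

/-- Assumption 1: `‖A ·‖` is a norm on `N(J)` equivalent to the restriction of `‖·‖`. -/
def ANormEquiv {X : Type*} [NormedAddCommGroup X] [NormedSpace ℝ X]
    {H : Type*} [NormedAddCommGroup H] [InnerProductSpace ℝ H]
    (A : X →L[ℝ] H) (J : X → ℝ≥0∞) : Prop :=
  ∃ c > (0:ℝ), ∃ C > (0:ℝ), ∀ u, J u = 0 → c * ‖u‖ ≤ ‖A u‖ ∧ ‖A u‖ ≤ C * ‖u‖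

/-- `PA` is the `A`-orthogonal projection onto `N(J)`. -/
def IsAProj {X : Type*} [NormedAddCommGroup X] [NormedSpace ℝ X]
    {H : Type*} [NormedAddCommGroup H] [InnerProductSpace ℝ H]
    (A : X →L[ℝ] H) (J : X → ℝ≥0∞) (PA : H → X) : Prop :=
  ∀ g : H, J (PA g) = 0 ∧ (∀ u, J u = 0 → ‖A (PA g) - g‖ ≤ ‖A u - g‖) ∧
    (∀ u, J u = 0 → ‖A u - g‖ ≤ ‖A (PA g) - g‖ → u = PA g)

/-- Assumption 2: generalized Poincaré inequality. -/
def PoincareIneq {X : Type*} [NormedAddCommGroup X] [NormedSpace ℝ X]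
    {H : Type*} [NormedAddCommGroup H] [InnerProductSpace ℝ H]
    (A : X →L[ℝ] H) (J : X → ℝ≥0∞) (PA : H → X) : Prop :=
  ∃ C > (0:ℝ), ∀ u, ENNReal.ofReal ‖u - PA (A u)‖ ≤ ENNReal.ofReal C * J u


section CorHelpSec
namespace CorHelp

set_option maxHeartbeats 1000000

lemma rpow_succ_aux {x : ℝ} (hx : 0 < x) (q : ℝ) : x ^ q * x = x ^ (q + 1) := by
  calc x ^ q * x = x ^ q * x ^ (1:ℝ) := by rw [Real.rpow_one]
    _ = x ^ (q + 1) := (Real.rpow_add hx _ _).symm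

/-- Convex tangent bound: `x^p - y^p ≤ p x^(p-1) (x-y)` for `0 ≤ y ≤ x`, `1 ≤ p`. -/
lemma rpow_diff_le (p x y : ℝ) (hp : 1 ≤ p) (hy : 0 ≤ y) (hxy : y ≤ x) :
    x ^ p - y ^ p ≤ p * x ^ (p - 1) * (x - y) := by
  rcases eq_or_lt_of_le (hy.trans hxy) with hx0 | hx0
  · have hx : x = 0 := hx0.symm
    have hy0 : y = 0 := le_antisymm (hxy.trans_eq hx) hy
    subst hx; subst hy0
    simp [Real.zero_rpow (by positivity : p ≠ 0)]
  · have hxne : x ≠ 0 := ne_of_gt hx0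
    have hs : -1 ≤ y / x - 1 := by
      have : 0 ≤ y / x := div_nonneg hy hx0.le
      linarith
    have hb := one_add_mul_self_le_rpow_one_add hs hp
    have h1 : (1 : ℝ) + (y / x - 1) = y / x := by ring
    rw [h1, Real.div_rpow hy hx0.le] at hb
    have hxp : (0:ℝ) < x ^ p := Real.rpow_pos_of_pos hx0 p
    have hmul := mul_le_mul_of_nonneg_right hb hxp.le
    rw [div_mul_cancel₀ _ (ne_of_gt hxp)] at hmul
    have hxs : x ^ (p - 1) * x = x ^ p := by
      rw [rpow_succ_aux hx0]; ring_nf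
    have key : (1 + p * (y / x - 1)) * x ^ p = x ^ p + p * x ^ (p-1) * (y - x) := by
      rw [← hxs]; field_simp
    rw [key] at hmul
    linarith

/-- Lower bound: `x^(p-1) (x-y) ≤ x^p - y^p` for `0 ≤ y ≤ x`, `1 ≤ p`. -/
lemma rpow_diff_ge (p x y : ℝ) (hp : 1 ≤ p) (hy : 0 ≤ y) (hxy : y ≤ x) :
    x ^ (p - 1) * (x - y) ≤ x ^ p - y ^ p := by
  rcases eq_or_lt_of_le (hy.trans hxy) with hx0 | hx0
  · have hx : x = 0 := hx0.symm
    have hy0 : y = 0 := le_antisymm (hxy.trans_eq hx) hy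
    subst hx; subst hy0
    simp [Real.zero_rpow (by positivity : p ≠ 0)]
  · have hxs : x ^ (p - 1) * x = x ^ p := by rw [rpow_succ_aux hx0]; ring_nf
    have hys : y ^ p ≤ x ^ (p-1) * y := by
      rcases eq_or_lt_of_le hy with h0 | hy0
      · rw [← h0]; simp [Real.zero_rpow (by positivity : p ≠ 0)]
      · have hyy : y ^ (p - 1) * y = y ^ p := by rw [rpow_succ_aux hy0]; ring_nf
        have hle : y ^ (p - 1) ≤ x ^ (p - 1) :=
          Real.rpow_le_rpow hy hxy (by linarith)
        nlinarith
    nlinarith [hxs]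

/-- Midpoint convexity of rpow. -/
lemma rpow_midpoint_le (p x y : ℝ) (hp : 1 ≤ p) (hx : 0 ≤ x) (hy : 0 ≤ y) :
    ((x + y) / 2) ^ p ≤ (x ^ p + y ^ p) / 2 := by
  have h := (convexOn_rpow hp).2 (Set.mem_Ici.2 hx) (Set.mem_Ici.2 hy)
      (by norm_num : (0:ℝ) ≤ 1/2) (by norm_num : (0:ℝ) ≤ 1/2) (by norm_num)
  simp only [smul_eq_mul] at h
  calc ((x + y)/2) ^ p = (1/2 * x + 1/2 * y) ^ p := by ring_nf
    _ ≤ 1/2 * x ^ p + 1/2 * y ^ p := h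
    _ = (x ^ p + y ^ p)/2 := by ring

/-- `(x²)^(α/2) = x^α` for `x ≥ 0`. -/
lemma sq_rpow_half (x α : ℝ) (hx : 0 ≤ x) : (x ^ 2) ^ (α / 2) = x ^ α := by
  rw [← Real.rpow_natCast x 2, ← Real.rpow_mul hx,
    show ((2:ℕ):ℝ) * (α/2) = α by push_cast; ring]

/-- Uniform convexity of `‖·‖^α`, `α ≥ 2`, in a real inner product space. -/
lemma norm_rpow_strong_convex {H : Type*} [NormedAddCommGroup H] [InnerProductSpace ℝ H]
    (α : ℝ) (hα : 2 ≤ α) (a b : H) :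
    2 * (‖a + b‖ / 2) ^ α + 2 ^ (1 - α) * ‖a - b‖ ^ 2 * (‖a‖ + ‖b‖) ^ (α - 2)
      ≤ ‖a‖ ^ α + ‖b‖ ^ α := by
  set p : ℝ := α / 2 with hp
  have hp1 : 1 ≤ p := by rw [hp]; linarith
  set S : ℝ := (‖a‖ ^ 2 + ‖b‖ ^ 2) / 2 with hS
  set P : ℝ := (‖a + b‖ / 2) ^ 2 with hP
  set Q : ℝ := (‖a - b‖ / 2) ^ 2 with hQ
  have hpar := parallelogram_law_with_norm ℝ a b
  have hPQ : P + Q = S := by rw [hP, hQ, hS]; nlinarith [hpar]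
  have hQ0 : 0 ≤ Q := by positivity
  have hP0 : 0 ≤ P := by positivity
  have hS0 : 0 ≤ S := by positivity
  have hi : S ^ (p - 1) * Q ≤ S ^ p - P ^ p := by
    have := rpow_diff_ge p S P hp1 hP0 (by linarith)
    calc S ^ (p-1) * Q = S ^ (p-1) * (S - P) := by rw [← hPQ]; ring
      _ ≤ S ^ p - P ^ p := this
  have hii : 2 * S ^ p ≤ ‖a‖ ^ α + ‖b‖ ^ α := by
    have h := rpow_midpoint_le p (‖a‖^2) (‖b‖^2) hp1 (by positivity) (by positivity)
    rw [hp, sq_rpow_half _ _ (norm_nonneg a), sq_rpow_half _ _ (norm_nonneg b)] at h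
    rw [hS]; linarith
  have hiii : ((‖a‖ + ‖b‖)/2) ^ (α - 2) ≤ S ^ (p - 1) := by
    have hbase : ((‖a‖ + ‖b‖)/2) ^ 2 ≤ S := by rw [hS]; nlinarith [sq_nonneg (‖a‖ - ‖b‖)]
    have h2 : (((‖a‖ + ‖b‖)/2) ^ 2) ^ (p - 1) ≤ S ^ (p - 1) :=
      Real.rpow_le_rpow (by positivity) hbase (by rw [hp]; linarith)
    have heq : (((‖a‖ + ‖b‖)/2) ^ 2) ^ (p - 1) = ((‖a‖ + ‖b‖)/2) ^ (α - 2) := by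
      rw [← Real.rpow_natCast ((‖a‖ + ‖b‖)/2) 2, ← Real.rpow_mul (by positivity), hp,
        show ((2:ℕ):ℝ) * (α/2 - 1) = α - 2 by push_cast; ring]
    rw [← heq]; exact h2
  have hPα : P ^ p = (‖a + b‖ / 2) ^ α := by
    rw [hP, hp, sq_rpow_half _ _ (by positivity)]
  have hdiv : ((‖a‖ + ‖b‖)/2) ^ (α - 2) = (‖a‖ + ‖b‖) ^ (α - 2) / 2 ^ (α - 2) := by
    rw [Real.div_rpow (by positivity) (by norm_num)]
  have hm : (0:ℝ) < (2:ℝ) ^ (α - 2) := Real.rpow_pos_of_pos (by norm_num) _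
  have h2pow : (2:ℝ) ^ (1 - α) * 2 ^ (α - 2) = 1/2 := by
    rw [← Real.rpow_add (by norm_num : (0:ℝ) < 2),
      show (1-α) + (α-2) = (-1:ℝ) by ring, Real.rpow_neg_one]
    norm_num
  have htarget : 2 ^ (1 - α) * ‖a - b‖ ^ 2 * (‖a‖ + ‖b‖) ^ (α - 2) ≤ 2 * (S ^ (p-1) * Q) := by
    have hQval : Q = ‖a - b‖^2 / 4 := by rw [hQ]; ring
    have step : ((‖a‖ + ‖b‖) ^ (α-2) / 2 ^ (α-2)) * Q ≤ S ^ (p-1) * Q := by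
      apply mul_le_mul_of_nonneg_right _ hQ0
      rw [← hdiv]; exact hiii
    have h1α : (2:ℝ) ^ (1 - α) = 1 / (2 * 2 ^ (α - 2)) := by
      rw [eq_div_iff (by positivity)]
      calc (2:ℝ) ^ (1-α) * (2 * 2 ^ (α-2)) = 2 * ((2:ℝ) ^ (1-α) * 2 ^ (α-2)) := by ring
        _ = 1 := by rw [h2pow]; norm_num
    have heqq : 2 ^ (1 - α) * ‖a - b‖ ^ 2 * (‖a‖ + ‖b‖) ^ (α - 2)
        = 2 * (((‖a‖ + ‖b‖) ^ (α-2) / 2 ^ (α-2)) * Q) := by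
      rw [hQval, h1α]
      field_simp
      ring
    rw [heqq]; linarith
  rw [← hPα]
  linarith [hi, hii, htarget]

/-- Concave tangent line inequality for `0 < p ≤ 1`. -/
lemma rpow_le_tangent (p x y : ℝ) (hp0 : 0 < p) (hp1 : p ≤ 1) (hx : 0 < x) (hy : 0 ≤ y) :
    y ^ p ≤ x ^ p + p * x ^ (p - 1) * (y - x) := by
  have hs : -1 ≤ y / x - 1 := by
    have : 0 ≤ y / x := div_nonneg hy hx.le
    linarith
  have hb := rpow_one_add_le_one_add_mul_self hs hp0.le hp1
  rw [show (1 : ℝ) + (y / x - 1) = y / x by ring, Real.div_rpow hy hx.le] at hb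
  have hxp : (0:ℝ) < x ^ p := Real.rpow_pos_of_pos hx p
  have hmul := mul_le_mul_of_nonneg_right hb hxp.le
  rw [div_mul_cancel₀ _ (ne_of_gt hxp)] at hmul
  have hxs : x ^ (p - 1) * x = x ^ p := by
    rw [rpow_succ_aux hx]; ring_nf
  have key : (1 + p * (y / x - 1)) * x ^ p = x ^ p + p * x ^ (p-1) * (y - x) := by
    rw [← hxs]; field_simp
  rw [key] at hmul
  linarith

/-- Scalar uniform convexity of `t ↦ t^β` on `[0,x]` for `1 < β < 2`. -/
lemma scalar_strong_lt_two (β x y : ℝ) (hβ1 : 1 < β) (hβ2 : β < 2)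
    (hy : 0 ≤ y) (hyx : y ≤ x) (hx : 0 < x) :
    ((x + y) / 2) ^ β + (β * (β - 1) / 8) * (x - y) ^ 2 * x ^ (β - 2)
      ≤ (x ^ β + y ^ β) / 2 := by
  set μ : ℝ := β * (β - 1) * x ^ (β - 2) with hμ
  have hμ0 : 0 < μ := by
    have h2 := Real.rpow_pos_of_pos hx (β - 2)
    rw [hμ]
    apply mul_pos (mul_pos (by linarith) (by linarith)) h2
  set f : ℝ → ℝ := fun t => t ^ β - μ / 2 * t ^ 2 with hf
  have hcont : Continuous fun t : ℝ => t ^ β := by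
    rw [continuous_iff_continuousAt]
    intro t
    exact Real.continuousAt_rpow_const t β (Or.inr (by linarith))
  have hderiv : ∀ t : ℝ, 0 < t → HasDerivAt f (β * t ^ (β - 1) - μ * t) t := by
    intro t ht
    have h1 : HasDerivAt (fun s : ℝ => s ^ β) (β * t ^ (β - 1)) t :=
      Real.hasDerivAt_rpow_const (Or.inl (ne_of_gt ht))
    have h2 : HasDerivAt (fun s : ℝ => μ / 2 * s ^ 2) (μ / 2 * (2 * t)) t := by
      have := (hasDerivAt_pow 2 t).const_mul (μ / 2)
      simpa using this
    have := h1.sub h2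
    rw [show β * t ^ (β - 1) - μ * t = β * t ^ (β - 1) - μ / 2 * (2 * t) by ring]
    exact this
  have hconv : ConvexOn ℝ (Set.Icc 0 x) f := by
    have hint : interior (Set.Icc (0:ℝ) x) = Set.Ioo 0 x := interior_Icc
    apply MonotoneOn.convexOn_of_deriv (convex_Icc 0 x)
    · exact (hcont.sub (by continuity)).continuousOn
    · intro t ht
      rw [hint] at ht
      exact ((hderiv t ht.1).differentiableAt).differentiableWithinAt
    · intro t1 ht1 t2 ht2 h12
      rw [hint] at ht1 ht2
      rw [(hderiv t1 ht1.1).deriv, (hderiv t2 ht2.1).deriv]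
      have htan := rpow_le_tangent (β - 1) t2 t1 (by linarith) (by linarith) ht2.1 ht1.1.le
      have hxw : x ^ (β - 2) ≤ t2 ^ (β - 2) :=
        Real.rpow_le_rpow_of_nonpos ht2.1 ht2.2.le (by linarith)
      have hexp : (β : ℝ) - 1 - 1 = β - 2 := by ring
      rw [hexp] at htan
      have hstep : t2 ^ (β-2) * (t1 - t2) ≤ x ^ (β-2) * (t1 - t2) :=
        mul_le_mul_of_nonpos_right hxw (by linarith)
      have h3 : β * ((β-1) * (t2 ^ (β-2) * (t1 - t2))) ≤ β * ((β-1) * (x ^ (β-2) * (t1 - t2))) :=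
        mul_le_mul_of_nonneg_left (mul_le_mul_of_nonneg_left hstep (by linarith)) (by linarith)
      have h4 := mul_le_mul_of_nonneg_left htan (by linarith : (0:ℝ) ≤ β)
      rw [hμ]
      nlinarith [h3, h4]
  have hx_mem : x ∈ Set.Icc (0:ℝ) x := ⟨hx.le, le_refl x⟩
  have hy_mem : y ∈ Set.Icc (0:ℝ) x := ⟨hy, hyx⟩
  have h := hconv.2 hx_mem hy_mem (by norm_num : (0:ℝ) ≤ 1/2) (by norm_num : (0:ℝ) ≤ 1/2)
      (by norm_num)
  simp only [smul_eq_mul, hf] at h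
  have hmid : (1:ℝ)/2 * x + 1/2 * y = (x + y)/2 := by ring
  rw [hmid, hμ] at h
  nlinarith [h]

/-- Scalar uniform convexity for `β ≥ 2`. -/
lemma scalar_strong_ge_two (β x y : ℝ) (hβ2 : 2 ≤ β) (hy : 0 ≤ y) (hyx : y ≤ x) :
    ((x + y) / 2) ^ β + (2 ^ ((1:ℝ) - β) / 2) * (x - y) ^ 2 * x ^ (β - 2)
      ≤ (x ^ β + y ^ β) / 2 := by
  have hx0 : 0 ≤ x := hy.trans hyx
  have h := norm_rpow_strong_convex β hβ2 (x:ℝ) (y:ℝ)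
  rw [Real.norm_eq_abs, Real.norm_eq_abs, Real.norm_eq_abs, Real.norm_eq_abs,
    abs_of_nonneg hx0, abs_of_nonneg hy, abs_of_nonneg (by linarith : (0:ℝ) ≤ x + y),
    abs_of_nonneg (by linarith : (0:ℝ) ≤ x - y)] at h
  have hmono : x ^ (β - 2) ≤ (x + y) ^ (β - 2) :=
    Real.rpow_le_rpow hx0 (by linarith) (by linarith)
  have h2 : (2:ℝ) ^ ((1:ℝ) - β) * (x - y) ^ 2 * x ^ (β - 2)
      ≤ 2 ^ ((1:ℝ) - β) * (x - y) ^ 2 * (x + y) ^ (β - 2) := by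
    apply mul_le_mul_of_nonneg_left hmono (by positivity)
  linarith [h, h2]

/-- The core real-variable computation. -/
lemma core_real (α β δ s t M Rs Rt gs gt gw Rw d c : ℝ)
    (hα : 2 ≤ α) (hβ : 1 ≤ β) (hδ : 0 < δ) (hs : δ < s) (hst : s < t)
    (hRs0 : 0 ≤ Rs) (hRt0 : 0 ≤ Rt) (hgs0 : 0 ≤ gs) (hgt0 : 0 ≤ gt) (hgw0 : 0 ≤ gw)
    (hM0 : 0 ≤ M) (hd0 : 0 ≤ d)
    (hRtM : Rt ≤ M)
    (hgsB : (s/β) * gs ^ β ≤ (1/α) * M ^ α)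
    (hRd : Rt - Rs ≤ d)
    (hgw : gw ≤ (gs + gt)/2)
    (hT4 : 2 * Rw ^ α + 2 ^ ((1:ℝ) - α) * d ^ 2 * (Rt + Rs) ^ (α - 2) ≤ Rt ^ α + Rs ^ α)
    (hC1 : (1/α) * Rt ^ α + (t/β) * gt ^ β ≤ (1/α) * Rs ^ α + (t/β) * gs ^ β)
    (hC2 : (1/α) * Rs ^ α + (s/β) * gs ^ β ≤ (1/α) * Rt ^ α + (s/β) * gt ^ β)
    (hC3 : (1/α) * Rt ^ α + (t/β) * gt ^ β ≤ (1/α) * Rw ^ α + (t/β) * gw ^ β)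
    (hC4 : (1/α) * Rs ^ α + (s/β) * gs ^ β ≤ (1/α) * Rw ^ α + (s/β) * gw ^ β)
    (hc : 0 < c)
    (hcineq : 1 < β → ∀ x y : ℝ, 0 ≤ y → y ≤ x →
      ((x+y)/2) ^ β + c * (x-y)^2 * x ^ (β-2) ≤ (x ^ β + y ^ β)/2) :
    0 ≤ Rt - Rs ∧ Rt - Rs ≤ (α * 2 ^ (α - 2) * M / δ) * (t - s) ∧
    0 ≤ gs - gt ∧ gs - gt ≤ (max ((M ^ (α-1) * (α * 2 ^ (α-2) * M / δ)) / δ)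
       (β * ((β * M ^ α / (α * δ)) ^ (β⁻¹)) / (4 * c * δ))) * (t - s) := by
  have hα0 : (0:ℝ) < α := by linarith
  have hβ0 : (0:ℝ) < β := by linarith
  have hs0 : (0:ℝ) < s := hδ.trans hs
  have ht0 : (0:ℝ) < t := hs0.trans hst
  have hts : (0:ℝ) < t - s := by linarith
  have htspos : (0:ℝ) ≤ t - s := hts.le
  have htsum : (0:ℝ) ≤ (t + s)/β := div_nonneg (by linarith) hβ0.le
  have htshalf : (0:ℝ) ≤ (t - s)/(2*β) := div_nonneg htspos (by linarith)
  have h2a2 : (0:ℝ) < (2:ℝ) ^ (α - 2) := Real.rpow_pos_of_pos (by norm_num) _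
  have h21a : (0:ℝ) < (2:ℝ) ^ ((1:ℝ) - α) := Real.rpow_pos_of_pos (by norm_num) _
  set gmax : ℝ := (β * M ^ α / (α * δ)) ^ (β⁻¹) with hgm
  have hgmax0 : (0:ℝ) ≤ gmax := Real.rpow_nonneg (by positivity) _
  set K1 : ℝ := α * 2 ^ (α - 2) * M / δ with hK1
  have hK10 : (0:ℝ) ≤ K1 := by rw [hK1]; positivity
  set K2a : ℝ := (M ^ (α-1) * K1) / δ with hK2a
  have hK2a0 : (0:ℝ) ≤ K2a := by
    rw [hK2a]
    exact div_nonneg (mul_nonneg (Real.rpow_nonneg hM0 _) hK10) hδ.le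
  set K2b : ℝ := β * gmax / (4 * c * δ) with hK2b
  have hK2b0 : (0:ℝ) ≤ K2b := by
    rw [hK2b]
    exact div_nonneg (mul_nonneg hβ0.le hgmax0) (by positivity)
  -- step 1 : gt^β ≤ gs^β
  have hGts : gt ^ β ≤ gs ^ β := by
    have hfac : (0:ℝ) < t/β - s/β := by
      have h : s / β < t / β := by gcongr
      linarith
    have h2 : (t/β - s/β) * gt ^ β ≤ (t/β - s/β) * gs ^ β := by
      ring_nf at hC1 hC2 ⊢
      linarith [hC1, hC2]
    exact le_of_mul_le_mul_left h2 hfac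
  have hgts : gt ≤ gs := (Real.rpow_le_rpow_iff hgt0 hgs0 hβ0).mp hGts
  -- step 2 : Rs ≤ Rt
  have hRts : Rs ≤ Rt := by
    have h1 : (s/β) * (gt ^ β - gs ^ β) ≤ 0 :=
      mul_nonpos_of_nonneg_of_nonpos (by positivity) (by linarith)
    have h2 : (1/α) * Rs ^ α ≤ (1/α) * Rt ^ α := by
      ring_nf at hC2 h1 ⊢
      linarith [hC2, h1]
    have h3 : Rs ^ α ≤ Rt ^ α :=
      le_of_mul_le_mul_left (by linarith) (by positivity : (0:ℝ) < 1/α)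
    exact (Real.rpow_le_rpow_iff hRs0 hRt0 hα0).mp h3
  have hRt0sub : (0:ℝ) ≤ Rt - Rs := by linarith
  have hgt0sub : (0:ℝ) ≤ gs - gt := by linarith
  -- gs ≤ gmax
  have hgsβ0 : (0:ℝ) ≤ gs ^ β := Real.rpow_nonneg hgs0 β
  have hgsβ : gs ^ β ≤ β * M ^ α / (α * δ) := by
    have h1 : (α*β) * ((s/β) * gs ^ β) = α * s * gs ^ β := by field_simp
    have h2 : (α*β) * ((1/α) * M ^ α) = β * M ^ α := by field_simp
    have h3 := mul_le_mul_of_nonneg_left hgsB (by positivity : (0:ℝ) ≤ α*β)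
    rw [h1, h2] at h3
    rw [le_div_iff₀ (by positivity)]
    have h4 : α * (δ * gs ^ β) ≤ α * (s * gs ^ β) :=
      mul_le_mul_of_nonneg_left
        (mul_le_mul_of_nonneg_right hs.le hgsβ0) hα0.le
    linarith [h3, h4]
  have hgmax : gs ≤ gmax := by
    have h1 : (gs ^ β) ^ (β⁻¹) ≤ (β * M ^ α / (α * δ)) ^ (β⁻¹) :=
      Real.rpow_le_rpow hgsβ0 hgsβ (by positivity)
    rw [Real.rpow_rpow_inv hgs0 (ne_of_gt hβ0)] at h1
    exact h1
  -- ΔG bound via C2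
  have hΔG : (s/β) * (gs ^ β - gt ^ β) ≤ Rt ^ (α - 1) * (Rt - Rs) := by
    have h1 := rpow_diff_le α Rt Rs (by linarith) hRs0 hRts
    have h2 : (1/α) * (Rt ^ α - Rs ^ α) ≤ (1/α) * (α * Rt ^ (α-1) * (Rt - Rs)) :=
      mul_le_mul_of_nonneg_left h1 (by positivity)
    have h3 : (1/α) * (α * Rt ^ (α-1) * (Rt - Rs)) = Rt ^ (α-1) * (Rt - Rs) := by
      field_simp
    rw [h3] at h2
    ring_nf at hC2 h2 ⊢
    linarith [hC2, h2]
  -- (MAIN-PRE)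
  set m : ℝ := ((gs + gt)/2) ^ β with hm
  set W : ℝ := (Rt + Rs) ^ (α - 2) with hW
  have hW0 : (0:ℝ) ≤ W := Real.rpow_nonneg (by linarith) _
  have hMAIN : (1/α) * (2 ^ ((1:ℝ)-α) * d ^ 2 * W) + ((t+s)/β) * ((gs ^ β + gt ^ β)/2 - m)
      ≤ ((t-s)/(2*β)) * (gs ^ β - gt ^ β) := by
    have hgwβ : gw ^ β ≤ m := by
      rw [hm]; exact Real.rpow_le_rpow hgw0 hgw hβ0.le
    have h5 : ((t+s)/β) * gw ^ β ≤ ((t+s)/β) * m :=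
      mul_le_mul_of_nonneg_left hgwβ htsum
    have h6 : (1/α) * (2 * Rw ^ α + 2 ^ ((1:ℝ)-α) * d ^ 2 * W)
        ≤ (1/α) * (Rt ^ α + Rs ^ α) :=
      mul_le_mul_of_nonneg_left (by rw [hW]; exact hT4) (by positivity)
    ring_nf at hC3 hC4 h5 h6 ⊢
    linarith [hC3, hC4, h5, h6]
  have hmmid : m ≤ (gs ^ β + gt ^ β)/2 := by
    rw [hm]; exact rpow_midpoint_le β gs gt hβ hgs0 hgt0
  have hMAIN2 : (1/α) * (2 ^ ((1:ℝ)-α) * d ^ 2 * W) ≤ ((t-s)/(2*β)) * (gs ^ β - gt ^ β) := by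
    have h7 : (0:ℝ) ≤ ((t+s)/β) * ((gs ^ β + gt ^ β)/2 - m) :=
      mul_nonneg htsum (by linarith)
    linarith [hMAIN]
  -- R branch
  have hRbound : Rt - Rs ≤ K1 * (t - s) := by
    rcases eq_or_lt_of_le hRt0 with hRt00 | hRtpos
    · have hRtz : Rt = 0 := hRt00.symm
      have hRsz : Rs = 0 := le_antisymm (hRts.trans_eq hRtz) hRs0
      rw [hRtz, hRsz]
      have : (0:ℝ) ≤ K1 * (t - s) := mul_nonneg hK10 htspos
      linarith
    · have hWL : Rt ^ (α-2) ≤ W := by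
        rw [hW]; exact Real.rpow_le_rpow hRt0 (by linarith) (by linarith)
      have hWpos : (0:ℝ) < W := by
        rw [hW]; exact Real.rpow_pos_of_pos (by linarith) _
      have hRt1 : Rt ^ (α-1) = Rt ^ (α-2) * Rt := by
        rw [rpow_succ_aux hRtpos (α-2), show α - 2 + 1 = α - 1 by ring]
      have hts2s : (0:ℝ) ≤ (t-s)/(2*s) := div_nonneg htspos (by linarith)
      have hstep1 : ((t-s)/(2*β)) * (gs ^ β - gt ^ β)
          ≤ ((t-s)/(2*s)) * (Rt ^ (α-1) * (Rt - Rs)) := by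
        have hx := mul_le_mul_of_nonneg_left hΔG (by positivity : (0:ℝ) ≤ β/s)
        have he1 : (β/s) * ((s/β) * (gs ^ β - gt ^ β)) = gs ^ β - gt ^ β := by
          field_simp
        rw [he1] at hx
        have h2 := mul_le_mul_of_nonneg_left hx htshalf
        calc ((t-s)/(2*β)) * (gs ^ β - gt ^ β)
            ≤ ((t-s)/(2*β)) * ((β/s) * (Rt ^ (α-1) * (Rt - Rs))) := h2
          _ = ((t-s)/(2*s)) * (Rt ^ (α-1) * (Rt - Rs)) := by field_simp
      have hstep2 : ((t-s)/(2*s)) * (Rt ^ (α-1) * (Rt - Rs))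
          ≤ ((t-s)/(2*s)) * (Rt ^ (α-1) * d) :=
        mul_le_mul_of_nonneg_left
          (mul_le_mul_of_nonneg_left hRd (Real.rpow_nonneg hRt0 _)) hts2s
      have hRtW : Rt ^ (α-1) * d ≤ Rt * W * d := by
        rw [hRt1]
        have h := mul_le_mul_of_nonneg_right
          (mul_le_mul_of_nonneg_right hWL hRt0) hd0
        linarith [h]
      have hchain2 : (1/α) * (2 ^ ((1:ℝ)-α) * d ^ 2 * W) ≤ ((t-s)/(2*s)) * (Rt * W * d) := by
        calc (1/α) * (2 ^ ((1:ℝ)-α) * d ^ 2 * W)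
            ≤ ((t-s)/(2*β)) * (gs ^ β - gt ^ β) := hMAIN2
          _ ≤ ((t-s)/(2*s)) * (Rt ^ (α-1) * (Rt - Rs)) := hstep1
          _ ≤ ((t-s)/(2*s)) * (Rt ^ (α-1) * d) := hstep2
          _ ≤ ((t-s)/(2*s)) * (Rt * W * d) :=
              mul_le_mul_of_nonneg_left hRtW hts2s
      have h2pow : (2:ℝ) ^ ((1:ℝ)-α) * 2 ^ (α-2) = 1/2 := by
        rw [← Real.rpow_add (by norm_num : (0:ℝ) < 2),
          show (1-α) + (α-2) = (-1:ℝ) by ring, Real.rpow_neg_one]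
        norm_num
      have hdb : d ≤ α * 2 ^ (α-2) * ((t-s)/s) * Rt := by
        rcases eq_or_lt_of_le hd0 with hd00 | hdpos
        · rw [← hd00]
          exact mul_nonneg (mul_nonneg (by positivity)
            (div_nonneg htspos hs0.le)) hRt0
        · have hkey : ((1/α) * 2 ^ ((1:ℝ)-α) * d) * (d * W)
              ≤ (((t-s)/(2*s)) * Rt) * (d * W) := by
            ring_nf at hchain2 ⊢
            linarith [hchain2]
          have hdW : (0:ℝ) < d * W := mul_pos hdpos hWpos
          have h9 : (1/α) * 2 ^ ((1:ℝ)-α) * d ≤ ((t-s)/(2*s)) * Rt :=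
            le_of_mul_le_mul_right hkey hdW
          have hαinv : α * (1/α) = 1 := by field_simp
          have hid : (α * 2 ^ (α-2) * 2) * ((1/α) * 2 ^ ((1:ℝ)-α)) = 1 := by
            calc (α * 2 ^ (α-2) * 2) * ((1/α) * 2 ^ ((1:ℝ)-α))
                = (α * (1/α)) * (2 ^ ((1:ℝ)-α) * 2 ^ (α-2)) * 2 := by ring
              _ = 1 := by rw [hαinv, h2pow]; norm_num
          have h10 := mul_le_mul_of_nonneg_left h9
            (by positivity : (0:ℝ) ≤ α * 2 ^ (α-2) * 2)
          calc d = (α * 2 ^ (α-2) * 2) * ((1/α) * 2 ^ ((1:ℝ)-α)) * d := by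
                rw [hid]; ring
            _ = (α * 2 ^ (α-2) * 2) * ((1/α) * 2 ^ ((1:ℝ)-α) * d) := by ring
            _ ≤ (α * 2 ^ (α-2) * 2) * (((t-s)/(2*s)) * Rt) := h10
            _ = α * 2 ^ (α-2) * ((t-s)/s) * Rt := by field_simp
      have hfrac : Rt / s ≤ M / δ := div_le_div₀ hM0 hRtM hδ hs.le
      calc Rt - Rs ≤ d := hRd
        _ ≤ α * 2 ^ (α-2) * ((t-s)/s) * Rt := hdb
        _ = (α * 2 ^ (α-2) * (t-s)) * (Rt/s) := by ring
        _ ≤ (α * 2 ^ (α-2) * (t-s)) * (M/δ) :=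
            mul_le_mul_of_nonneg_left hfrac (mul_nonneg (by positivity) htspos)
        _ = K1 * (t - s) := by rw [hK1]; ring
  -- g branch
  have hgbound : gs - gt ≤ (max K2a K2b) * (t - s) := by
    rcases eq_or_lt_of_le hβ with hβ1 | hβ1
    · -- β = 1
      have hb : β = 1 := hβ1.symm
      have hΔG' : s * (gs - gt) ≤ Rt ^ (α-1) * (Rt - Rs) := by
        rw [hb] at hΔG
        simpa [Real.rpow_one] using hΔG
      have hRtα1 : Rt ^ (α-1) ≤ M ^ (α-1) := Real.rpow_le_rpow hRt0 hRtM (by linarith)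
      have h1 : Rt ^ (α-1) * (Rt - Rs) ≤ M ^ (α-1) * (K1 * (t-s)) :=
        mul_le_mul hRtα1 hRbound hRt0sub (Real.rpow_nonneg hM0 _)
      have h2 : s * (gs - gt) ≤ M ^ (α-1) * (K1 * (t-s)) := le_trans hΔG' h1
      have h3 : δ * (gs - gt) ≤ s * (gs - gt) :=
        mul_le_mul_of_nonneg_right hs.le hgt0sub
      have h4 : gs - gt ≤ (M ^ (α-1) * K1 * (t-s)) / δ := by
        rw [le_div_iff₀ hδ]
        linarith [h2, h3]
      calc gs - gt ≤ (M ^ (α-1) * K1 * (t-s)) / δ := h4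
        _ = K2a * (t - s) := by rw [hK2a]; ring
        _ ≤ (max K2a K2b) * (t - s) :=
            mul_le_mul_of_nonneg_right (le_max_left _ _) htspos
    · -- 1 < β
      rcases eq_or_lt_of_le hgs0 with hgsz | hgspos
      · have hgsz' : gs = 0 := hgsz.symm
        have hgtz : gt = 0 := le_antisymm (hgts.trans_eq hgsz') hgt0
        rw [hgsz', hgtz]
        have : (0:ℝ) ≤ (max K2a K2b) * (t - s) :=
          mul_nonneg (le_trans hK2a0 (le_max_left _ _)) htspos
        linarith
      · rcases eq_or_lt_of_le hgt0sub with hΔgz | hΔgpos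
        · rw [← hΔgz]
          exact mul_nonneg (le_trans hK2a0 (le_max_left _ _)) htspos
        · set V : ℝ := gs ^ (β-2) with hV
          have hVpos : (0:ℝ) < V := by rw [hV]; exact Real.rpow_pos_of_pos hgspos _
          have hsc := hcineq hβ1 gs gt hgt0 hgts
          have hgap : c * (gs-gt)^2 * V ≤ (gs ^ β + gt ^ β)/2 - m := by
            rw [hm, hV]; linarith [hsc]
          have h8 : ((t+s)/β) * (c * (gs-gt)^2 * V)
              ≤ ((t-s)/(2*β)) * (gs ^ β - gt ^ β) := by
            have hx := mul_le_mul_of_nonneg_left hgap htsum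
            have h7 : (0:ℝ) ≤ (1/α) * (2 ^ ((1:ℝ)-α) * d ^ 2 * W) :=
              mul_nonneg (by positivity)
                (mul_nonneg (mul_nonneg h21a.le (sq_nonneg d)) hW0)
            linarith [hMAIN, hx]
          have htan := rpow_diff_le β gs gt hβ hgt0 hgts
          have hgs1 : gs ^ (β-1) = V * gs := by
            rw [hV, rpow_succ_aux hgspos (β-2), show β - 2 + 1 = β - 1 by ring]
          have h9 : ((t-s)/(2*β)) * (gs ^ β - gt ^ β)
              ≤ ((t-s)/(2*β)) * (β * (V * gs) * (gs - gt)) := by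
            apply mul_le_mul_of_nonneg_left _ htshalf
            rw [← hgs1]; exact htan
          have h10 : ((t+s)/β) * (c * (gs-gt)^2 * V)
              ≤ ((t-s)/2) * (gs * (gs - gt) * V) := by
            have he : ((t-s)/(2*β)) * (β * (V * gs) * (gs - gt))
                = ((t-s)/2) * (gs * (gs - gt) * V) := by field_simp
            linarith [h8, h9, he.le, he.symm.le]
          have hkey : (c * ((t+s)/β) * (gs - gt)) * ((gs-gt) * V)
              ≤ (((t-s)/2) * gs) * ((gs-gt) * V) := by
            ring_nf at h10 ⊢
            linarith [h10]
          have hposfac : (0:ℝ) < (gs-gt) * V := mul_pos hΔgpos hVpos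
          have h11 : c * ((t+s)/β) * (gs - gt) ≤ ((t-s)/2) * gs :=
            le_of_mul_le_mul_right hkey hposfac
          have h12 : c * ((2*δ)/β) * (gs - gt) ≤ c * ((t+s)/β) * (gs - gt) := by
            apply mul_le_mul_of_nonneg_right _ hgt0sub
            apply mul_le_mul_of_nonneg_left _ hc.le
            gcongr
            linarith
          have h13 : ((t-s)/2) * gs ≤ ((t-s)/2) * gmax :=
            mul_le_mul_of_nonneg_left hgmax (by linarith)
          have h14 : c * ((2*δ)/β) * (gs - gt) ≤ ((t-s)/2) * gmax := by linarith
          have h15 := mul_le_mul_of_nonneg_left h14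
            (by positivity : (0:ℝ) ≤ β / (2*c*δ))
          have hidl : β / (2*c*δ) * (c * ((2*δ)/β) * (gs - gt)) = gs - gt := by
            field_simp
          have hidr : β / (2*c*δ) * (((t-s)/2) * gmax) = K2b * (t-s) := by
            rw [hK2b]; field_simp; ring
          rw [hidl, hidr] at h15
          calc gs - gt ≤ K2b * (t-s) := h15
            _ ≤ (max K2a K2b) * (t - s) :=
              mul_le_mul_of_nonneg_right (le_max_right _ _) htspos
  exact ⟨hRt0sub, hRbound, hgt0sub, hgbound⟩

section EnLemmas

variable {X : Type*} [NormedAddCommGroup X] [NormedSpace ℝ X]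
  {H : Type*} [NormedAddCommGroup H] [InnerProductSpace ℝ H]

lemma J_zero (J : X → ℝ≥0∞) (hhom : AbsOneHom J) : J (0 : X) = 0 := by
  have h := hhom 0 0
  rw [zero_smul] at h
  simpa using h

lemma En_ofReal (A : X →L[ℝ] H) (J : X → ℝ≥0∞) (f : H) (t α β : ℝ)
    (ht : 0 ≤ t) (hα : 0 < α) (hβ : 0 < β) (u : X) (hu : J u ≠ ⊤) :
    En A J f t α β u
      = ENNReal.ofReal ((1/α) * ‖A u - f‖ ^ α + (t/β) * ((J u).toReal) ^ β) := by
  have h1 : (0:ℝ) ≤ (1/α) * ‖A u - f‖ ^ α := by positivity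
  have h2 : (0:ℝ) ≤ (t/β) * ((J u).toReal) ^ β := by positivity
  rw [ENNReal.ofReal_add h1 h2]
  unfold En
  have hJu : J u = ENNReal.ofReal ((J u).toReal) := (ENNReal.ofReal_toReal hu).symm
  nth_rewrite 1 [hJu]
  rw [ENNReal.ofReal_rpow_of_nonneg ENNReal.toReal_nonneg hβ.le,
    ← ENNReal.ofReal_mul (div_nonneg ht hβ.le)]

lemma En_zero (A : X →L[ℝ] H) (J : X → ℝ≥0∞) (f : H) (t α β : ℝ) (hβ : 0 < β)
    (hhom : AbsOneHom J) :
    En A J f t α β (0 : X) = ENNReal.ofReal ((1/α) * ‖f‖ ^ α) := by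
  unfold En
  rw [J_zero J hhom, ENNReal.zero_rpow_of_pos hβ, mul_zero, add_zero, map_zero,
    zero_sub, norm_neg]

lemma minimizer_props (A : X →L[ℝ] H) (J : X → ℝ≥0∞) (f : H) (t α β : ℝ)
    (ht : 0 < t) (hα : 0 < α) (hβ : 0 < β) (hhom : AbsOneHom J)
    (u : X) (hmin : IsMinimizer A J f t α β u) :
    J u ≠ ⊤ ∧ ‖A u - f‖ ≤ ‖f‖ ∧ (t/β) * ((J u).toReal) ^ β ≤ (1/α) * ‖f‖ ^ α ∧
    ∀ z : X, J z ≠ ⊤ →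
      (1/α) * ‖A u - f‖ ^ α + (t/β) * ((J u).toReal) ^ β
        ≤ (1/α) * ‖A z - f‖ ^ α + (t/β) * ((J z).toReal) ^ β := by
  have h0 := hmin 0
  rw [En_zero A J f t α β hβ hhom] at h0
  have hutop : J u ≠ ⊤ := by
    intro htop
    have hofne : ENNReal.ofReal (t/β) ≠ 0 :=
      (ENNReal.ofReal_pos.mpr (div_pos ht hβ)).ne'
    have hEn : En A J f t α β u = ⊤ := by
      unfold En
      rw [htop, ENNReal.top_rpow_of_pos hβ, ENNReal.mul_top hofne]
      simp
    rw [hEn] at h0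
    exact ENNReal.ofReal_ne_top (top_le_iff.mp h0)
  have hmr : ∀ z : X, J z ≠ ⊤ →
      (1/α) * ‖A u - f‖ ^ α + (t/β) * ((J u).toReal) ^ β
        ≤ (1/α) * ‖A z - f‖ ^ α + (t/β) * ((J z).toReal) ^ β := by
    intro z hz
    have h := hmin z
    rw [En_ofReal A J f t α β ht.le hα hβ u hutop,
      En_ofReal A J f t α β ht.le hα hβ z hz] at h
    have hz0 : (0:ℝ) ≤ (1/α) * ‖A z - f‖ ^ α + (t/β) * ((J z).toReal) ^ β := by positivity
    exact (ENNReal.ofReal_le_ofReal_iff hz0).mp h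
  have hJ0 : J (0 : X) ≠ ⊤ := by rw [J_zero J hhom]; exact ENNReal.zero_ne_top
  have h00 := hmr 0 hJ0
  rw [map_zero, zero_sub, norm_neg, J_zero J hhom] at h00
  simp only [ENNReal.toReal_zero] at h00
  rw [Real.zero_rpow (ne_of_gt hβ), mul_zero, add_zero] at h00
  have hterm2 : (0:ℝ) ≤ (t/β) * ((J u).toReal) ^ β := by positivity
  have hterm1 : (0:ℝ) ≤ (1/α) * ‖A u - f‖ ^ α := by positivity
  refine ⟨hutop, ?_, by linarith, hmr⟩
  have h1 : (1/α) * ‖A u - f‖ ^ α ≤ (1/α) * ‖f‖ ^ α := by linarith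
  have h2 : ‖A u - f‖ ^ α ≤ ‖f‖ ^ α :=
    le_of_mul_le_mul_left (by linarith [h1]) (by positivity : (0:ℝ) < 1/α)
  exact (Real.rpow_le_rpow_iff (norm_nonneg _) (norm_nonneg f) hα).mp h2

end EnLemmas

end CorHelp
end CorHelpSec

/-- Corollary 3.6.
Let `α ≥ 2`, `β ≥ 1`. Then the residual map `t ↦ R(t) = ‖Au_t − f‖` and the regularizer
map `t ↦ J(t) = J(u_t)` (well-defined since minimizers share these values) are Lipschitz
continuous on `(δ,∞)` for every `δ > 0`. -/
theorem residual_and_regularizer_lipschitz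
    {Y : Type*} [NormedAddCommGroup Y] [NormedSpace ℝ Y]
    {H : Type*} [NormedAddCommGroup H] [InnerProductSpace ℝ H]
    (A : (Y →L[ℝ] ℝ) →L[ℝ] H) (J : (Y →L[ℝ] ℝ) → ℝ≥0∞) (f : H)
    (hproper : IsProperFn J) (hconv : EConvexFn J) (hlsc : WeakStarLSC J) (hhom : AbsOneHom J)
    (hdata : ∀ w, A w = f → J w ≠ 0)
    (α β : ℝ) (hα : 2 ≤ α) (hβ : 1 ≤ β)
    (hex : ∀ t : ℝ, 0 < t → ∃ u, IsMinimizer A J f t α β u)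
    (R Jm : ℝ → ℝ)
    (hR : ∀ t : ℝ, 0 < t → ∀ u, IsMinimizer A J f t α β u → R t = ‖A u - f‖)
    (hJm : ∀ t : ℝ, 0 < t → ∀ u, IsMinimizer A J f t α β u → Jm t = (J u).toReal) :
    ∀ δ : ℝ, 0 < δ → ∃ K₁ K₂ : NNReal,
      LipschitzOnWith K₁ R (Set.Ioi δ) ∧ LipschitzOnWith K₂ Jm (Set.Ioi δ) := by
  classical
  intro δ hδ
  have hα0 : (0:ℝ) < α := by linarith
  have hβ0 : (0:ℝ) < β := by linarith
  -- scalar uniform convexity constant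
  obtain ⟨c, hc, hcineq⟩ : ∃ c : ℝ, 0 < c ∧ (1 < β → ∀ x y : ℝ, 0 ≤ y → y ≤ x →
      ((x+y)/2) ^ β + c * (x-y)^2 * x ^ (β-2) ≤ (x ^ β + y ^ β)/2) := by
    rcases le_or_gt 2 β with h2 | h2
    · exact ⟨2 ^ ((1:ℝ) - β)/2, by positivity,
        fun _ x y hy hxy => CorHelp.scalar_strong_ge_two β x y h2 hy hxy⟩
    · rcases eq_or_lt_of_le hβ with h1 | h1
      · exact ⟨1, one_pos, fun h => absurd h (by rw [← h1]; exact lt_irrefl 1)⟩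
      · refine ⟨β * (β-1)/8, by nlinarith, fun _ x y hy hxy => ?_⟩
        rcases eq_or_lt_of_le (le_trans hy hxy) with hx0 | hx0
        · have hx : x = 0 := hx0.symm
          have hy0 : y = 0 := le_antisymm (hxy.trans_eq hx) hy
          rw [hx, hy0]
          simp [Real.zero_rpow (by positivity : β ≠ 0)]
        · exact CorHelp.scalar_strong_lt_two β x y h1 h2 hy hxy hx0
  set M : ℝ := ‖f‖ with hM
  have hM0 : (0:ℝ) ≤ M := norm_nonneg f
  set K1R : ℝ := α * 2 ^ (α - 2) * M / δ with hK1R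
  have hK1R0 : (0:ℝ) ≤ K1R := by rw [hK1R]; positivity
  set K2R : ℝ := max ((M ^ (α-1) * (α * 2 ^ (α-2) * M / δ)) / δ)
      (β * ((β * M ^ α / (α * δ)) ^ (β⁻¹)) / (4 * c * δ)) with hK2R
  have hK2R0 : (0:ℝ) ≤ K2R :=
    le_trans (div_nonneg (mul_nonneg (Real.rpow_nonneg hM0 _) (by positivity)) hδ.le)
      (le_max_left _ _)
  -- the key two-point estimate
  have key : ∀ s t : ℝ, δ < s → s < t →
      0 ≤ R t - R s ∧ R t - R s ≤ K1R * (t - s) ∧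
      0 ≤ Jm s - Jm t ∧ Jm s - Jm t ≤ K2R * (t - s) := by
    intro s t hs hst
    have hs0 : (0:ℝ) < s := hδ.trans hs
    have ht0 : (0:ℝ) < t := hs0.trans hst
    obtain ⟨u, hu⟩ := hex s hs0
    obtain ⟨v, hv⟩ := hex t ht0
    obtain ⟨hune, huM, husB, humin⟩ :=
      CorHelp.minimizer_props A J f s α β hs0 hα0 hβ0 hhom u hu
    obtain ⟨hvne, hvM, hvsB, hvmin⟩ :=
      CorHelp.minimizer_props A J f t α β ht0 hα0 hβ0 hhom v hv
    -- midpoint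
    set w := (1/2 : ℝ) • u + (1/2 : ℝ) • v with hw
    have hwle := hconv u v (1/2) (1/2) (by norm_num) (by norm_num) (by norm_num)
    have hwne : J w ≠ ⊤ := by
      refine ne_top_of_le_ne_top ?_ hwle
      exact ENNReal.add_ne_top.2 ⟨ENNReal.mul_ne_top ENNReal.ofReal_ne_top hune,
        ENNReal.mul_ne_top ENNReal.ofReal_ne_top hvne⟩
    have hgw : (J w).toReal ≤ ((J u).toReal + (J v).toReal)/2 := by
      have hJu : J u = ENNReal.ofReal ((J u).toReal) := (ENNReal.ofReal_toReal hune).symm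
      have hJv : J v = ENNReal.ofReal ((J v).toReal) := (ENNReal.ofReal_toReal hvne).symm
      rw [hJu, hJv, ← ENNReal.ofReal_mul (by norm_num : (0:ℝ) ≤ 1/2),
        ← ENNReal.ofReal_mul (by norm_num : (0:ℝ) ≤ 1/2),
        ← ENNReal.ofReal_add (by positivity) (by positivity)] at hwle
      have h := ENNReal.toReal_le_of_le_ofReal (by positivity) hwle
      linarith [h]
    have hAw : A w - f = (1/2 : ℝ) • ((A v - f) + (A u - f)) := by
      have h1 : A w = (1/2 : ℝ) • A u + (1/2 : ℝ) • A v := by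
        rw [hw, map_add, map_smul, map_smul]
      rw [h1]
      module
    have hRwval : ‖A v - f + (A u - f)‖ / 2 = ‖A w - f‖ := by
      rw [hAw, norm_smul]
      rw [Real.norm_eq_abs, abs_of_pos (by norm_num : (0:ℝ) < 1/2)]
      ring
    have hT4 := CorHelp.norm_rpow_strong_convex α hα (A v - f) (A u - f)
    rw [hRwval] at hT4
    have hRd : ‖A v - f‖ - ‖A u - f‖ ≤ ‖(A v - f) - (A u - f)‖ :=
      norm_sub_norm_le _ _
    have hC1 := hvmin u hune
    have hC2 := humin v hvne
    have hC3 := hvmin w hwne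
    have hC4 := humin w hwne
    obtain ⟨k1, k2, k3, k4⟩ :=
      CorHelp.core_real α β δ s t M ‖A u - f‖ ‖A v - f‖ ((J u).toReal) ((J v).toReal)
        ((J w).toReal) ‖A w - f‖ ‖(A v - f) - (A u - f)‖ c
        hα hβ hδ hs hst (norm_nonneg _) (norm_nonneg _) ENNReal.toReal_nonneg
        ENNReal.toReal_nonneg ENNReal.toReal_nonneg hM0 (norm_nonneg _)
        hvM husB hRd hgw hT4 hC1 hC2 hC3 hC4 hc hcineq
    have hRs' : R s = ‖A u - f‖ := hR s hs0 u hu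
    have hRt' : R t = ‖A v - f‖ := hR t ht0 v hv
    have hJs' : Jm s = (J u).toReal := hJm s hs0 u hu
    have hJt' : Jm t = (J v).toReal := hJm t ht0 v hv
    rw [hRs', hRt', hJs', hJt']
    exact ⟨k1, k2, k3, k4⟩
  refine ⟨Real.toNNReal K1R, Real.toNNReal K2R, ?_, ?_⟩
  · apply LipschitzOnWith.of_dist_le_mul
    intro x hx y hy
    rw [Real.coe_toNNReal _ hK1R0]
    rcases lt_trichotomy x y with h | h | h
    · obtain ⟨h1, h2, _, _⟩ := key x y hx h
      rw [Real.dist_eq, Real.dist_eq, abs_sub_comm (R x) (R y), abs_of_nonneg h1,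
        abs_sub_comm x y, abs_of_nonneg (by linarith : (0:ℝ) ≤ y - x)]
      linarith
    · rw [h]
      simp [dist_self]
    · obtain ⟨h1, h2, _, _⟩ := key y x hy h
      rw [Real.dist_eq, Real.dist_eq, abs_of_nonneg h1,
        abs_of_nonneg (by linarith : (0:ℝ) ≤ x - y)]
      linarith
  · apply LipschitzOnWith.of_dist_le_mul
    intro x hx y hy
    rw [Real.coe_toNNReal _ hK2R0]
    rcases lt_trichotomy x y with h | h | h
    · obtain ⟨_, _, h3, h4⟩ := key x y hx h
      rw [Real.dist_eq, Real.dist_eq, abs_of_nonneg h3,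
        abs_sub_comm x y, abs_of_nonneg (by linarith : (0:ℝ) ≤ y - x)]
      linarith
    · rw [h]
      simp [dist_self]
    · obtain ⟨_, _, h3, h4⟩ := key y x hy h
      rw [Real.dist_eq, Real.dist_eq, abs_sub_comm (Jm x) (Jm y), abs_of_nonneg h3,
        abs_of_nonneg (by linarith : (0:ℝ) ≤ x - y)]
      linarith


end
end

section
/- Let f = Σ_{i=1}^n γ_i u_i be a linear combination of pairwise orthogonal eigenvectors of J, i.e. γ_i ≠ 0, λ_i u_i ∈ ∂J(u_i) with λ_i > 0 for each i, and ⟨u_i, u_j⟩ = 0 for i ≠ j. Define p_k := Σ_{i=k}^n sgn(γ_i) λ_i u_i and assume p_k ∈ ∂J(0) for every k = 1, …, n (the SUB0 condition), and assume the ordering |γ_i|/λ_i < |γ_{i+1}|/λ_{i+1} for i = 1, …, n−1. Set τ_0 := 0 and τ_k := |γ_k|/λ_k for k = 1, …, n. Then for every k = 1, …, n and every τ with τ_{k−1} < τ ≤ τ_k, the minimizer of v ↦ (1/2)‖v − f‖_H^2 + τ J(v) over H is v_τ = Σ_{i=k}^n sgn(γ_i)(|γ_i| − τ λ_i) u_i.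 -/
open Filter Topology Set
open scoped ENNReal RealInnerProductSpace

noncomputable section

/-- The subdifferential of `J : H → [0,∞]` at `u ∈ H`, with the dual identified with `H`. -/
def subdiffH {H : Type*} [NormedAddCommGroup H] [InnerProductSpace ℝ H]
    (J : H → ℝ≥0∞) (u : H) : Set H :=
  {p | ∀ v, (J u : EReal) + ((⟪p, v - u⟫ : ℝ) : EReal) ≤ (J v : EReal)}

lemma ereal_ne_top' {a b : ℝ≥0∞} {r : ℝ} (h : (a : EReal) + (r : EReal) ≤ (b : EReal))
    (hb : b ≠ ⊤) : a ≠ ⊤ := by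
  intro ha
  rw [ha, EReal.coe_ennreal_top, EReal.top_add_of_ne_bot (EReal.coe_ne_bot r)] at h
  exact hb (EReal.coe_ennreal_eq_top_iff.mp (top_le_iff.mp h))

lemma ereal_toReal' {a b : ℝ≥0∞} {r : ℝ} (h : (a : EReal) + (r : EReal) ≤ (b : EReal))
    (ha : a ≠ ⊤) (hb : b ≠ ⊤) : a.toReal + r ≤ b.toReal := by
  have ha' : (a : EReal) = ((a.toReal : ℝ) : EReal) := by
    rw [← EReal.toReal_coe_ennreal (x := a)]
    exact (EReal.coe_toReal (by simpa using ha) (EReal.coe_ennreal_ne_bot a)).symm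
  have hb' : (b : EReal) = ((b.toReal : ℝ) : EReal) := by
    rw [← EReal.toReal_coe_ennreal (x := b)]
    exact (EReal.coe_toReal (by simpa using hb) (EReal.coe_ennreal_ne_bot b)).symm
  rw [ha', hb', ← EReal.coe_add, EReal.coe_le_coe_iff] at h
  exact h

lemma ico_to_range {M : Type*} [AddCommMonoid M] (g : ℕ → M) (j n : ℕ) (hj : j ≤ n) :
    ∑ i ∈ Finset.Ico j n, g i = ∑ i ∈ Finset.range n, (if i < j then 0 else g i) := by
  rw [Finset.range_eq_Ico, ← Finset.sum_Ico_consecutive _ (Nat.zero_le j) hj]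
  have h1 : ∑ i ∈ Finset.Ico 0 j, (if i < j then (0:M) else g i) = 0 := by
    apply Finset.sum_eq_zero
    intro i hi
    rw [if_pos (Finset.mem_Ico.mp hi).2]
  have h2 : ∑ i ∈ Finset.Ico j n, (if i < j then (0:M) else g i) = ∑ i ∈ Finset.Ico j n, g i := by
    apply Finset.sum_congr rfl
    intro i hi
    rw [if_neg (not_lt.mpr (Finset.mem_Ico.mp hi).1)]
  rw [h1, h2, zero_add]

section Helpers
variable {H : Type*} [NormedAddCommGroup H] [InnerProductSpace ℝ H]

lemma aux_J0 (J : H → ℝ≥0∞) (hproper : ∃ v, J v ≠ ⊤)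
    (hhom : ∀ (c : ℝ) (u : H), J (c • u) = ENNReal.ofReal |c| * J u) : J 0 = 0 := by
  obtain ⟨v, hv⟩ := hproper
  have := hhom 0 v
  simpa [hv] using this

lemma aux_add (J : H → ℝ≥0∞)
    (hconv : ∀ (u v : H) (a b : ℝ), 0 ≤ a → 0 ≤ b → a + b = 1 →
      J (a • u + b • v) ≤ ENNReal.ofReal a * J u + ENNReal.ofReal b * J v)
    (hhom : ∀ (c : ℝ) (u : H), J (c • u) = ENNReal.ofReal |c| * J u) (x y : H) :
    J (x + y) ≤ J x + J y := by
  have h1 := hconv x y (1/2) (1/2) (by norm_num) (by norm_num) (by norm_num)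
  have h2 : J ((2:ℝ) • ((1/2 : ℝ) • x + (1/2 : ℝ) • y)) = ENNReal.ofReal 2 *
      J ((1/2 : ℝ) • x + (1/2 : ℝ) • y) := by
    rw [hhom]; norm_num
  have h3 : (2:ℝ) • ((1/2 : ℝ) • x + (1/2 : ℝ) • y) = x + y := by
    rw [smul_add, smul_smul, smul_smul]; norm_num
  rw [h3] at h2
  calc J (x + y) = ENNReal.ofReal 2 * J ((1/2 : ℝ) • x + (1/2 : ℝ) • y) := h2
    _ ≤ ENNReal.ofReal 2 * (ENNReal.ofReal (1/2) * J x + ENNReal.ofReal (1/2) * J y) :=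
        mul_le_mul_right h1 _
    _ = (ENNReal.ofReal 2 * ENNReal.ofReal (1/2)) * J x
        + (ENNReal.ofReal 2 * ENNReal.ofReal (1/2)) * J y := by ring
    _ = J x + J y := by
        rw [← ENNReal.ofReal_mul (by norm_num)]; norm_num

lemma aux_sum (J : H → ℝ≥0∞)
    (hconv : ∀ (u v : H) (a b : ℝ), 0 ≤ a → 0 ≤ b → a + b = 1 →
      J (a • u + b • v) ≤ ENNReal.ofReal a * J u + ENNReal.ofReal b * J v)
    (hhom : ∀ (c : ℝ) (u : H), J (c • u) = ENNReal.ofReal |c| * J u)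
    (hJ0 : J 0 = 0) (s : Finset ℕ) (g : ℕ → H) :
    J (∑ i ∈ s, g i) ≤ ∑ i ∈ s, J (g i) := by
  classical
  induction s using Finset.induction_on with
  | empty => simp [hJ0]
  | insert _ _ hx ih =>
    rw [Finset.sum_insert hx, Finset.sum_insert hx]
    exact le_trans (aux_add J hconv hhom _ _) (add_le_add_right ih _)

lemma aux_eig (J : H → ℝ≥0∞)
    (hhom : ∀ (c : ℝ) (u : H), J (c • u) = ENNReal.ofReal |c| * J u)
    (hJ0 : J 0 = 0) (lam : ℝ) (w : H)
    (h : ∀ v, (J w : EReal) + ((⟪lam • w, v - w⟫ : ℝ) : EReal) ≤ (J v : EReal)) :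
    J w = ENNReal.ofReal (lam * ‖w‖ ^ 2) := by
  have h0 := h 0
  rw [hJ0] at h0
  have hip0 : (⟪lam • w, (0:H) - w⟫ : ℝ) = -(lam * ‖w‖ ^ 2) := by
    simp [real_inner_smul_left, real_inner_self_eq_norm_sq]
  rw [hip0] at h0
  have hne : J w ≠ ⊤ := ereal_ne_top' h0 (by simp)
  have h0' := ereal_toReal' h0 hne (by simp)
  simp only [ENNReal.toReal_zero] at h0'
  have h2 := h ((2:ℝ) • w)
  have hip2 : (⟪lam • w, (2:ℝ) • w - w⟫ : ℝ) = lam * ‖w‖ ^ 2 := by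
    have hw : (2:ℝ) • w - w = w := by
      rw [two_smul]; abel
    rw [hw, real_inner_smul_left, real_inner_self_eq_norm_sq]
  rw [hip2] at h2
  have h2top : J ((2:ℝ) • w) ≠ ⊤ := by
    rw [hhom]
    exact ENNReal.mul_ne_top ENNReal.ofReal_ne_top hne
  have h2' := ereal_toReal' h2 hne h2top
  have h2'' : (J ((2:ℝ) • w)).toReal = 2 * (J w).toReal := by
    rw [hhom, ENNReal.toReal_mul, ENNReal.toReal_ofReal (by norm_num)]
    norm_num
  rw [h2''] at h2'
  have heq : (J w).toReal = lam * ‖w‖ ^ 2 := by linarith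
  rw [← heq, ENNReal.ofReal_toReal hne]

lemma aux_inner_orth (n : ℕ) (u : ℕ → H)
    (horth : ∀ i < n, ∀ j < n, i ≠ j → (⟪u i, u j⟫ : ℝ) = 0)
    (g : ℕ → ℝ) (i : ℕ) (hi : i < n) :
    (⟪u i, ∑ j ∈ Finset.range n, g j • u j⟫ : ℝ) = g i * ‖u i‖ ^ 2 := by
  rw [inner_sum]
  rw [Finset.sum_eq_single i]
  · rw [real_inner_smul_right, real_inner_self_eq_norm_sq]
  · intro j hj hne
    rw [real_inner_smul_right, horth i hi j (Finset.mem_range.mp hj) (Ne.symm hne), mul_zero]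
  · intro hcon
    exact absurd (Finset.mem_range.mpr hi) hcon

end Helpers

/-- Linear combination of eigenvectors I, Theorem 4.2.
Let `f = Σ_{i<n} γ_i u_i` with pairwise orthogonal eigenvectors `λ_i u_i ∈ ∂J(u_i)`,
`γ_i ≠ 0`, `λ_i > 0`, satisfying the (SUB0) condition
`p_k := Σ_{i=k}^{n-1} sgn(γ_i) λ_i u_i ∈ ∂J(0)` and the ordering
`|γ_i|/λ_i < |γ_{i+1}|/λ_{i+1}`. Then, with `τ_0 = 0` and `τ_{k+1} = |γ_k|/λ_k`, for every
`k < n` and `τ_k < τ ≤ τ_{k+1}` the (unique) minimizer of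
`v ↦ ½‖v − f‖² + τ J(v)` is `v_τ = Σ_{i=k}^{n-1} sgn(γ_i)(|γ_i| − τ λ_i) u_i`. -/
theorem linear_combination_of_eigenvectors
    {H : Type*} [NormedAddCommGroup H] [InnerProductSpace ℝ H]
    (J : H → ℝ≥0∞)
    (hproper : ∃ v, J v ≠ ⊤)
    (hconv : ∀ (u v : H) (a b : ℝ), 0 ≤ a → 0 ≤ b → a + b = 1 →
      J (a • u + b • v) ≤ ENNReal.ofReal a * J u + ENNReal.ofReal b * J v)
    (hlsc : LowerSemicontinuous J)
    (hhom : ∀ (c : ℝ) (u : H), J (c • u) = ENNReal.ofReal |c| * J u)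
    (n : ℕ) (γ lam : ℕ → ℝ) (u : ℕ → H) (f : H)
    (hf : f = ∑ i ∈ Finset.range n, γ i • u i)
    (hγ : ∀ i < n, γ i ≠ 0)
    (hlam : ∀ i < n, 0 < lam i)
    (heig : ∀ i < n, lam i • u i ∈ subdiffH J (u i))
    (horth : ∀ i < n, ∀ j < n, i ≠ j → (⟪u i, u j⟫ : ℝ) = 0)
    (hsub0 : ∀ k < n,
      (∑ i ∈ Finset.Ico k n, (Real.sign (γ i) * lam i) • u i) ∈ subdiffH J 0)
    (hord : ∀ i : ℕ, i + 1 < n → |γ i| / lam i < |γ (i + 1)| / lam (i + 1)) :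
    ∀ k < n, ∀ τ : ℝ,
      (k = 0 → 0 < τ) → (∀ k' : ℕ, k = k' + 1 → |γ k'| / lam k' < τ) →
      τ ≤ |γ k| / lam k →
      (∀ v : H,
        ENNReal.ofReal ((1/2) * ‖(∑ i ∈ Finset.Ico k n,
            (Real.sign (γ i) * (|γ i| - τ * lam i)) • u i) - f‖ ^ 2) +
          ENNReal.ofReal τ * J (∑ i ∈ Finset.Ico k n,
            (Real.sign (γ i) * (|γ i| - τ * lam i)) • u i) ≤
        ENNReal.ofReal ((1/2) * ‖v - f‖ ^ 2) + ENNReal.ofReal τ * J v) ∧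
      (∀ v : H,
        (∀ v' : H, ENNReal.ofReal ((1/2) * ‖v - f‖ ^ 2) + ENNReal.ofReal τ * J v ≤
          ENNReal.ofReal ((1/2) * ‖v' - f‖ ^ 2) + ENNReal.ofReal τ * J v') →
        v = ∑ i ∈ Finset.Ico k n, (Real.sign (γ i) * (|γ i| - τ * lam i)) • u i) := by
  intro k hk τ hτ0 hτk' hτle
  have hJ0 : J 0 = 0 := aux_J0 J hproper hhom
  -- τ is positive
  have hτpos : 0 < τ := by
    rcases k with _ | k'
    · exact hτ0 rfl
    · have hk'n : k' < n := by omega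
      have h1 := hτk' k' rfl
      have h2 : 0 < |γ k'| / lam k' :=
        div_pos (abs_pos.mpr (hγ k' hk'n)) (hlam k' hk'n)
      linarith
  -- monotonicity of |γ i| / lam i
  have hmono : ∀ i j, i ≤ j → j < n → |γ i| / lam i ≤ |γ j| / lam j := by
    intro i j hij hj
    induction j with
    | zero =>
      have hi0 : i = 0 := Nat.le_zero.mp hij
      rw [hi0]
    | succ j ih =>
      rcases Nat.eq_or_lt_of_le hij with h | h
      · rw [h]
      · exact le_trans (ih (by omega) (by omega)) (le_of_lt (hord j hj))
  -- τ * lam i ≤ |γ i| for k ≤ i < n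
  have hτi : ∀ i, k ≤ i → i < n → τ * lam i ≤ |γ i| := by
    intro i hki hi
    have h1 : τ ≤ |γ i| / lam i := le_trans hτle (hmono k i hki hi)
    rwa [le_div_iff₀ (hlam i hi)] at h1
  -- |γ i| / lam i < τ for i < k
  have hτlt : ∀ i, i < k → |γ i| / lam i < τ := by
    intro i hik
    obtain ⟨k', rfl⟩ : ∃ k', k = k' + 1 := ⟨k - 1, by omega⟩
    exact lt_of_le_of_lt (hmono i k' (by omega) (by omega)) (hτk' k' rfl)
  -- eigenvalue identity for J (u i)
  have hJu : ∀ i < n, J (u i) = ENNReal.ofReal (lam i * ‖u i‖ ^ 2) := by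
    intro i hi
    exact aux_eig J hhom hJ0 (lam i) (u i) (heig i hi)
  -- sign facts
  have hsgn2 : ∀ i < n, Real.sign (γ i) * Real.sign (γ i) = 1 := by
    intro i hi
    rcases Real.sign_apply_eq_of_ne_zero (γ i) (hγ i hi) with h | h <;> rw [h] <;> norm_num
  have hsgnabs : ∀ i < n, |Real.sign (γ i)| = 1 := by
    intro i hi
    rcases Real.sign_apply_eq_of_ne_zero (γ i) (hγ i hi) with h | h <;> rw [h] <;> norm_num
  have hsgnγ : ∀ i < n, Real.sign (γ i) * |γ i| = γ i := by
    intro i hi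
    rcases (hγ i hi).lt_or_gt with h | h
    · rw [Real.sign_of_neg h, abs_of_neg h]; ring
    · rw [Real.sign_of_pos h, abs_of_pos h]; ring
  -- notation
  set vτ : H := ∑ i ∈ Finset.Ico k n, (Real.sign (γ i) * (|γ i| - τ * lam i)) • u i with hvτdef
  set t : ℕ → ℝ := fun i => if i < k then |γ i| / (τ * lam i) else 1 with htdef
  set p : H := ∑ i ∈ Finset.range n, (t i * (Real.sign (γ i) * lam i)) • u i with hpdef
  set A : ℕ → ℝ := fun i => if i < k then 0 else Real.sign (γ i) * (|γ i| - τ * lam i)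
    with hAdef
  have hvτ : vτ = ∑ i ∈ Finset.range n, A i • u i := by
    rw [hvτdef, ico_to_range (fun i => (Real.sign (γ i) * (|γ i| - τ * lam i)) • u i) k n hk.le]
    apply Finset.sum_congr rfl
    intro i _
    by_cases hik : i < k <;> simp [hAdef, hik]
  -- f - vτ = τ • p
  have hfv : f - vτ = τ • p := by
    rw [hf, hvτ, hpdef, Finset.smul_sum, ← Finset.sum_sub_distrib]
    apply Finset.sum_congr rfl
    intro i hi
    have hi' : i < n := Finset.mem_range.mp hi
    rw [← sub_smul, smul_smul]
    congr 1
    by_cases hik : i < k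
    · have hlam' : lam i ≠ 0 := (hlam i hi').ne'
      have hτ' : τ ≠ 0 := hτpos.ne'
      simp only [hAdef, htdef, if_pos hik]
      have hre : τ * (|γ i| / (τ * lam i) * (Real.sign (γ i) * lam i))
          = Real.sign (γ i) * |γ i| := by
        field_simp
      rw [hre, hsgnγ i hi']
      ring
    · simp only [hAdef, htdef, if_neg hik]
      linear_combination (-1 : ℝ) * hsgnγ i hi'
  -- part (a): ⟪p, v⟫ ≤ (J v).toReal whenever J v ≠ ⊤
  have hpa : ∀ v : H, J v ≠ ⊤ → (⟪p, v⟫ : ℝ) ≤ (J v).toReal := by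
    intro v hv
    set b : ℕ → ℝ := fun i => (Real.sign (γ i) * lam i) * ⟪u i, v⟫ with hbdef
    have hqv : ∀ j < n, ∑ i ∈ Finset.Ico j n, b i ≤ (J v).toReal := by
      intro j hj
      have h := hsub0 j hj v
      rw [hJ0] at h
      have hip : (⟪∑ i ∈ Finset.Ico j n, (Real.sign (γ i) * lam i) • u i, v - 0⟫ : ℝ)
          = ∑ i ∈ Finset.Ico j n, b i := by
        rw [sub_zero, sum_inner]
        apply Finset.sum_congr rfl
        intro i _
        rw [real_inner_smul_left]
      rw [hip] at h
      have := ereal_toReal' h (by simp) hv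
      simpa using this
    have hpv : (⟪p, v⟫ : ℝ) = ∑ i ∈ Finset.range n, t i * b i := by
      rw [hpdef, sum_inner]
      apply Finset.sum_congr rfl
      intro i _
      rw [real_inner_smul_left, hbdef]
      ring
    set c : ℕ → ℝ := fun j => if j = 0 then t 0 else t j - t (j - 1) with hcdef
    have htmono : ∀ j, j + 1 < n → t j ≤ t (j + 1) := by
      intro j hj
      by_cases h1 : j + 1 < k
      · simp only [htdef, if_pos h1, if_pos (by omega : j < k)]
        have := hord j hj
        have hdiv : |γ j| / (τ * lam j) = (|γ j| / lam j) / τ := by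
          rw [div_div]; ring_nf
        have hdiv' : |γ (j+1)| / (τ * lam (j+1)) = (|γ (j+1)| / lam (j+1)) / τ := by
          rw [div_div]; ring_nf
        rw [hdiv, hdiv']
        gcongr
        all_goals exact (hord j hj).le
      · by_cases h2 : j < k
        · simp only [htdef, if_pos h2, if_neg h1]
          have hlt := hτlt j h2
          rw [div_le_one (mul_pos hτpos (hlam j (by omega)))]
          have := (div_lt_iff₀ (hlam j (by omega))).mp hlt
          nlinarith [hlam j (by omega : j < n)]
        · simp only [htdef, if_neg h2, if_neg h1]
          exact le_refl 1
    have ht0 : ∀ j < n, 0 ≤ t j := by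
      intro j hj
      by_cases h : j < k
      · simp only [htdef, if_pos h]
        exact div_nonneg (abs_nonneg _) (mul_nonneg hτpos.le (hlam j hj).le)
      · simp only [htdef, if_neg h]
        norm_num
    have htele : ∀ i, ∑ j ∈ Finset.range (i + 1), c j = t i := by
      intro i
      induction i with
      | zero => simp [hcdef]
      | succ i ih =>
        rw [Finset.sum_range_succ, ih]
        simp only [hcdef, if_neg (Nat.succ_ne_zero i), Nat.add_sub_cancel]
        ring
    have hcnn : ∀ j < n, 0 ≤ c j := by
      intro j hj
      rcases j with _ | j'
      · simpa [hcdef] using ht0 0 (by omega)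
      · simp only [hcdef, if_neg (Nat.succ_ne_zero j'), Nat.add_sub_cancel]
        have := htmono j' (by omega)
        linarith
    have hswap : ∑ j ∈ Finset.range n, c j * (∑ i ∈ Finset.Ico j n, b i)
        = ∑ i ∈ Finset.range n, t i * b i := by
      have h1 : ∀ j ∈ Finset.range n, c j * (∑ i ∈ Finset.Ico j n, b i)
          = ∑ i ∈ Finset.range n, (if j ≤ i then c j * b i else 0) := by
        intro j hj
        rw [Finset.mul_sum, ico_to_range (fun i => c j * b i) j n (Finset.mem_range.mp hj).le]
        apply Finset.sum_congr rfl
        intro i _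
        by_cases hij : j ≤ i
        · rw [if_pos hij, if_neg (not_lt.mpr hij)]
        · rw [if_neg hij, if_pos (not_le.mp hij)]
      rw [Finset.sum_congr rfl h1, Finset.sum_comm]
      apply Finset.sum_congr rfl
      intro i hi
      have hi' : i < n := Finset.mem_range.mp hi
      have h2 : ∑ j ∈ Finset.range n, (if j ≤ i then c j * b i else 0)
          = ∑ j ∈ Finset.range (i + 1), c j * b i := by
        rw [← Finset.sum_filter]
        apply Finset.sum_congr _ (fun _ _ => rfl)
        ext j
        simp only [Finset.mem_filter, Finset.mem_range, Nat.lt_succ_iff]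
        omega
      rw [h2, ← Finset.sum_mul, htele i]
    rw [hpv, ← hswap]
    calc ∑ j ∈ Finset.range n, c j * (∑ i ∈ Finset.Ico j n, b i)
        ≤ ∑ j ∈ Finset.range n, c j * (J v).toReal := by
          apply Finset.sum_le_sum
          intro j hj
          exact mul_le_mul_of_nonneg_left (hqv j (Finset.mem_range.mp hj))
            (hcnn j (Finset.mem_range.mp hj))
      _ = (∑ j ∈ Finset.range n, c j) * (J v).toReal := by rw [Finset.sum_mul]
      _ = (J v).toReal := by
          have hn1 : n - 1 + 1 = n := by omega
          have := htele (n - 1)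
          rw [hn1] at this
          rw [this]
          have : t (n - 1) = 1 := by
            simp only [htdef, if_neg (by omega : ¬ (n - 1 < k))]
          rw [this, one_mul]

  -- part (b): value of J at vτ
  set S : ℝ := ∑ i ∈ Finset.Ico k n, (|γ i| - τ * lam i) * (lam i * ‖u i‖ ^ 2) with hSdef
  have hSnn : (0:ℝ) ≤ S := by
    apply Finset.sum_nonneg
    intro i hi
    obtain ⟨hki, hin⟩ := Finset.mem_Ico.mp hi
    have h1 := hτi i hki hin
    have h2 : (0:ℝ) ≤ lam i * ‖u i‖ ^ 2 := mul_nonneg (hlam i hin).le (by positivity)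
    nlinarith
  have hpvτ : (⟪p, vτ⟫ : ℝ) = S := by
    rw [hpdef, sum_inner, hSdef]
    have h1 : ∀ i ∈ Finset.range n, (⟪(t i * (Real.sign (γ i) * lam i)) • u i, vτ⟫ : ℝ)
        = (if i < k then 0 else (|γ i| - τ * lam i) * (lam i * ‖u i‖ ^ 2)) := by
      intro i hi
      have hi' := Finset.mem_range.mp hi
      rw [real_inner_smul_left, hvτ, aux_inner_orth n u horth A i hi']
      by_cases hik : i < k
      · simp [hAdef, htdef, hik]
      · simp only [hAdef, htdef, if_neg hik]
        linear_combination ((|γ i| - τ * lam i) * (lam i * ‖u i‖ ^ 2)) * hsgn2 i hi'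
    rw [Finset.sum_congr rfl h1]
    exact (ico_to_range (fun i => (|γ i| - τ * lam i) * (lam i * ‖u i‖ ^ 2)) k n hk.le).symm
  have hJvτ_le : J vτ ≤ ENNReal.ofReal S := by
    calc J vτ ≤ ∑ i ∈ Finset.Ico k n, J ((Real.sign (γ i) * (|γ i| - τ * lam i)) • u i) :=
        aux_sum J hconv hhom hJ0 _ _
      _ = ∑ i ∈ Finset.Ico k n, ENNReal.ofReal ((|γ i| - τ * lam i) * (lam i * ‖u i‖ ^ 2)) := by
          apply Finset.sum_congr rfl
          intro i hi
          obtain ⟨hki, hin⟩ := Finset.mem_Ico.mp hi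
          have hnn : (0:ℝ) ≤ |γ i| - τ * lam i := by linarith [hτi i hki hin]
          rw [hhom, hJu i hin, abs_mul, hsgnabs i hin, one_mul, abs_of_nonneg hnn,
            ← ENNReal.ofReal_mul hnn]
      _ = ENNReal.ofReal S := by
          rw [hSdef, ENNReal.ofReal_sum_of_nonneg]
          intro i hi
          obtain ⟨hki, hin⟩ := Finset.mem_Ico.mp hi
          have h1 := hτi i hki hin
          have h2 : (0:ℝ) ≤ lam i * ‖u i‖ ^ 2 := mul_nonneg (hlam i hin).le (by positivity)
          nlinarith
  have hJvτ_ne : J vτ ≠ ⊤ := ne_top_of_le_ne_top ENNReal.ofReal_ne_top hJvτ_le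
  have hJvτ : J vτ = ENNReal.ofReal S := by
    refine le_antisymm hJvτ_le ?_
    have h := hpa vτ hJvτ_ne
    rw [hpvτ] at h
    calc ENNReal.ofReal S ≤ ENNReal.ofReal (J vτ).toReal := ENNReal.ofReal_le_ofReal h
      _ = J vτ := ENNReal.ofReal_toReal hJvτ_ne
  -- key real inequality
  have hkey : ∀ v : H, J v ≠ ⊤ →
      (1/2) * ‖vτ - f‖ ^ 2 + τ * S + (1/2) * ‖v - vτ‖ ^ 2
        ≤ (1/2) * ‖v - f‖ ^ 2 + τ * (J v).toReal := by
    intro v hv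
    have h1 : (⟪p, v⟫ : ℝ) ≤ (J v).toReal := hpa v hv
    have hexp : ‖v - f‖ ^ 2 = ‖v - vτ‖ ^ 2 + 2 * ⟪v - vτ, vτ - f⟫ + ‖vτ - f‖ ^ 2 := by
      have hsplit : v - f = (v - vτ) + (vτ - f) := by abel
      rw [hsplit, norm_add_sq_real]
    have hip : (⟪v - vτ, vτ - f⟫ : ℝ) = τ * S - τ * ⟪p, v⟫ := by
      have hvf : vτ - f = -(τ • p) := by rw [← neg_sub f vτ, hfv]
      have hcm : (⟪v - vτ, vτ - f⟫ : ℝ) = -(τ * ⟪p, v - vτ⟫) := by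
        rw [hvf, inner_neg_right, real_inner_smul_right, real_inner_comm]
      rw [hcm, inner_sub_right, hpvτ]
      ring
    have h3 : τ * ⟪p, v⟫ ≤ τ * (J v).toReal := mul_le_mul_of_nonneg_left h1 hτpos.le
    linarith [hexp, hip, h3]
  have hτne : ENNReal.ofReal τ ≠ 0 := (ENNReal.ofReal_pos.mpr hτpos).ne'
  -- energies as ofReal
  have hEτ : ENNReal.ofReal ((1/2) * ‖vτ - f‖ ^ 2) + ENNReal.ofReal τ * J vτ
      = ENNReal.ofReal ((1/2) * ‖vτ - f‖ ^ 2 + τ * S) := by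
    rw [hJvτ, ← ENNReal.ofReal_mul hτpos.le,
      ← ENNReal.ofReal_add (by positivity) (mul_nonneg hτpos.le hSnn)]
  have hEv : ∀ v : H, J v ≠ ⊤ →
      ENNReal.ofReal ((1/2) * ‖v - f‖ ^ 2) + ENNReal.ofReal τ * J v
      = ENNReal.ofReal ((1/2) * ‖v - f‖ ^ 2 + τ * (J v).toReal) := by
    intro v hv
    conv_lhs => rw [← ENNReal.ofReal_toReal hv]
    rw [← ENNReal.ofReal_mul hτpos.le,
      ← ENNReal.ofReal_add (by positivity) (mul_nonneg hτpos.le ENNReal.toReal_nonneg)]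
  constructor
  · intro v
    by_cases hv : J v = ⊤
    · rw [hv, ENNReal.mul_top hτne, add_top]
      exact le_top
    · rw [hEτ, hEv v hv]
      apply ENNReal.ofReal_le_ofReal
      linarith only [hkey v hv, sq_nonneg ‖v - vτ‖]
  · intro v hvmin
    have hE := hvmin vτ
    have hv : J v ≠ ⊤ := by
      intro h
      rw [h, ENNReal.mul_top hτne, add_top, hEτ] at hE
      exact ENNReal.ofReal_ne_top (top_le_iff.mp hE)
    rw [hEτ, hEv v hv] at hE
    have hre : (1/2) * ‖v - f‖ ^ 2 + τ * (J v).toReal ≤ (1/2) * ‖vτ - f‖ ^ 2 + τ * S :=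
      (ENNReal.ofReal_le_ofReal_iff
        (add_nonneg (by positivity) (mul_nonneg hτpos.le hSnn))).mp hE
    have hkk := hkey v hv
    have hnorm : ‖v - vτ‖ ^ 2 ≤ 0 := by linarith only [hre, hkk]
    have hsq : ‖v - vτ‖ ^ 2 = 0 := le_antisymm hnorm (by positivity)
    have hz : ‖v - vτ‖ = 0 := by
      exact pow_eq_zero_iff (two_ne_zero) |>.mp hsq
    exact sub_eq_zero.mp (norm_eq_zero.mp hz)

end
end
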